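/- Let N ≤ M be positive integers, let E_n ⊆ {1,...,M} be nonempty allowed arm sets for n ∈ {1,...,N}, and suppose there exists an injective map 𝓜 : {1,...,N} → {1,...,M} with 𝓜(n) ∈ E_n for all n. Call a profile b a valid one-step successor of profile a if: b(n) ∈ E_n for all n; and b(n) = a(n) for every player n that is non-colliding in a (i.e., no m ≠ n has a(m) = a(n)). Then for every profile a with a(n) ∈ E_n for all n, there exists a finite sequence a = a^0, a^1, ..., a^k with k ≤ N such that each a^{t+1} is a valid one-step successor of a^t and a^k is injective. -/

import Mathlib

/-- If the allowed-arm sets `E n` admit a player-saturating matching, then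
from every valid profile `a` there is a sequence of at most `N` valid one-step transitions
(in which every non-colliding player keeps her arm and all players stay within their
allowed sets) ending in an injective profile (a matching). -/
theorem exists_path_to_matching (N M : ℕ) (hN : 0 < N) (hNM : N ≤ M)
    (E : Fin N → Finset (Fin M)) (hE : ∀ n, (E n).Nonempty)
    (𝓜 : Fin N → Fin M) (h𝓜inj : Function.Injective 𝓜) (h𝓜mem : ∀ n, 𝓜 n ∈ E n)
    (a : Fin N → Fin M) (ha : ∀ n, a n ∈ E n) :
    ∃ k ≤ N, ∃ seq : ℕ → (Fin N → Fin M),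
      seq 0 = a ∧
      (∀ t < k,
        (∀ n, seq (t + 1) n ∈ E n) ∧
        (∀ n, ¬ (∃ m, m ≠ n ∧ seq t m = seq t n) → seq (t + 1) n = seq t n)) ∧
      Function.Injective (seq k) := by
  classical
  set f : (Fin N → Fin M) → (Fin N → Fin M) :=
    fun b n => if ∃ m, m ≠ n ∧ b m = b n then 𝓜 n else b n with hf
  -- all iterates stay in the allowed sets
  have hmem : ∀ t n, f^[t] a n ∈ E n := by
    intro t
    induction t with
    | zero => simpa using ha
    | succ t ih =>
      intro n
      rw [Function.iterate_succ_apply']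
      by_cases h : ∃ m, m ≠ n ∧ f^[t] a m = f^[t] a n
      · simp only [hf] at h ⊢; rw [if_pos h]; exact h𝓜mem n
      · simp only [hf] at h ih ⊢; rw [if_neg h]; exact ih n
  -- injective profiles are fixed points of f
  have hfix : ∀ b : Fin N → Fin M, Function.Injective b → f b = b := by
    intro b hb
    funext n
    have h : ¬ ∃ m, m ≠ n ∧ b m = b n := by
      rintro ⟨m, hmn, hbm⟩
      exact hmn (hb hbm)
    simp only [hf, if_neg h]
  set S : ℕ → Finset (Fin N) :=
    fun t => Finset.univ.filter (fun n => f^[t] a n = 𝓜 n) with hS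
  have hmono : ∀ t, S t ⊆ S (t + 1) := by
    intro t n hn
    simp only [hS, Finset.mem_filter, Finset.mem_univ, true_and] at hn ⊢
    rw [Function.iterate_succ_apply']
    by_cases h : ∃ m, m ≠ n ∧ f^[t] a m = f^[t] a n
    · simp only [hf] at h ⊢; rw [if_pos h]
    · simp only [hf] at h hn ⊢; rw [if_neg h]; exact hn
  have hstrict : ∀ t, ¬ Function.Injective (f^[t] a) → (S t).card < (S (t + 1)).card := by
    intro t hinj
    obtain ⟨x, y, hxy, hne⟩ := Function.not_injective_iff.mp hinj
    -- find a colliding player not yet at its matched arm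
    have key : ∃ n, (∃ m, m ≠ n ∧ f^[t] a m = f^[t] a n) ∧ f^[t] a n ≠ 𝓜 n := by
      by_cases hc : f^[t] a x = 𝓜 x
      · refine ⟨y, ⟨x, hne, hxy⟩, ?_⟩
        rw [← hxy, hc]
        intro h
        exact hne (h𝓜inj h)
      · exact ⟨x, ⟨y, fun h => hne h.symm, hxy.symm⟩, hc⟩
    obtain ⟨n, hcol, hnm⟩ := key
    apply Finset.card_lt_card
    refine ⟨hmono t, fun hsub => ?_⟩
    have hn1 : n ∈ S (t + 1) := by
      simp only [hS, Finset.mem_filter, Finset.mem_univ, true_and]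
      rw [Function.iterate_succ_apply']
      simp only [hf] at hcol ⊢; rw [if_pos hcol]
    have hn0 : n ∉ S t := by
      simp only [hS, Finset.mem_filter, Finset.mem_univ, true_and]
      exact hnm
    exact hn0 (hsub hn1)
  -- main invariant
  have main : ∀ t, Function.Injective (f^[t] a) ∨ t ≤ (S t).card := by
    intro t
    induction t with
    | zero => exact Or.inr (Nat.zero_le _)
    | succ t ih =>
      by_cases hinj : Function.Injective (f^[t] a)
      · left
        rw [Function.iterate_succ_apply', hfix _ hinj]
        exact hinj
      · right
        rcases ih with h | h
        · exact absurd h hinj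
        · exact Nat.succ_le_of_lt (lt_of_le_of_lt h (hstrict t hinj))
  refine ⟨N, le_refl N, fun t => f^[t] a, rfl, ?_, ?_⟩
  · intro t _
    constructor
    · intro n
      exact hmem (t + 1) n
    · intro n hn
      show f^[t + 1] a n = f^[t] a n
      rw [Function.iterate_succ_apply']
      exact if_neg hn
  · rcases main N with h | h
    · exact h
    · have hle : (S N).card ≤ N := by
        simpa using Finset.card_le_univ (S N)
      have hcard : (S N).card = N := le_antisymm hle h
      have huniv : S N = Finset.univ := Finset.eq_univ_of_card _ (by simpa using hcard)
      have hall : ∀ n, f^[N] a n = 𝓜 n := by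
        intro n
        have := huniv ▸ Finset.mem_univ n
        simpa [hS] using this
      intro x y hxy
      exact h𝓜inj (((hall x).symm.trans hxy).trans (hall y))
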